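/- For all integers k ≥ 0 and n, m > 0, the map P ↦ g(P) is a bijection from T_{n,k,m} onto the set of integer vectors (g₀, g₁, …, g_{n-1}) satisfying 0 ≤ g₀ ≤ k, gᵢ ≥ 0 for 0 ≤ i < n, and gᵢ ≤ g_{i-1} + m for 1 ≤ i < n. -/

import Mathlib

inductive Letter : Type
  | N : Letter
  | E : Letter
deriving DecidableEq, Repr

/-- The area vector `g(P) = (g₀, …, g_{n-1})` of a lattice word `w` (with the `p`-th
    letter `N` corresponding to the north step in the strip `i ≤ y ≤ i+1`, where `i`
    is the number of `N`'s before it): `gᵢ = k + m·i - xᵢ`, where `xᵢ` is the number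
    of east steps before the `(i+1)`-th north step.  This is the number of complete
    lattice squares in that strip lying right of the path and left of the line
    `x = k + my`. -/
def areaVec (k m : ℕ) (w : List Letter) : List ℤ :=
  (List.range w.length).filterMap fun p =>
    if w[p]? = some Letter.N then
      some ((k : ℤ) + (m : ℤ) * ((w.take p).count Letter.N : ℤ)
        - ((w.take p).count Letter.E : ℤ))
    else none

/-- `w` encodes a trapezoidal lattice path in `T_{n,k,m}`: it goes from `(0,0)` to
    `(k+mn, n)` and never goes strictly right of the line `x = k + my`, i.e. every
    prefix satisfies `#E ≤ k + m·#N`. -/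
def IsTrapWord (n k m : ℕ) (w : List Letter) : Prop :=
  w.count Letter.N = n ∧ w.count Letter.E = k + m * n ∧
    ∀ j : ℕ, (((w.take j).count Letter.E : ℤ)) ≤
      (k : ℤ) + (m : ℤ) * ((w.take j).count Letter.N : ℤ)

open Letter

lemma areaVec_nil (k m : ℕ) : areaVec k m [] = [] := rfl

lemma areaVec_cons_N (k m : ℕ) (w : List Letter) :
    areaVec k m (N :: w) = (k : ℤ) :: areaVec (k + m) m w := by
  simp only [areaVec, List.length_cons, List.range_succ_eq_map, List.filterMap_cons,
    List.filterMap_map]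
  simp only [List.getElem?_cons_zero, List.take_zero, List.count_nil, if_pos rfl]
  norm_num
  congr 1
  funext p
  simp [List.count_cons]
  split <;> [skip; rfl]
  congr 1
  push_cast
  ring

lemma areaVec_cons_E (k m : ℕ) (w : List Letter) :
    areaVec k m (E :: w) = (areaVec k m w).map (· - 1) := by
  simp only [areaVec, List.length_cons, List.range_succ_eq_map, List.filterMap_cons,
    List.filterMap_map, List.map_filterMap]
  simp only [List.getElem?_cons_zero]
  rw [if_neg (by decide)]
  dsimp only
  congr 1
  funext p
  simp [List.count_cons]
  split <;> [skip; rfl]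
  simp
  push_cast
  ring

lemma areaVec_shift (k m : ℕ) (w : List Letter) :
    areaVec (k + 1) m w = (areaVec k m w).map (· + 1) := by
  simp only [areaVec, List.map_filterMap]
  congr 1
  funext p
  split <;> [skip; rfl]
  simp
  push_cast
  ring

lemma areaVec_cons_E' (k m : ℕ) (w : List Letter) :
    areaVec (k + 1) m (E :: w) = areaVec k m w := by
  rw [areaVec_cons_E, areaVec_shift, List.map_map]
  simp [Function.comp_def]

lemma areaVec_length (k m : ℕ) (w : List Letter) :
    (areaVec k m w).length = w.count N := by
  induction w generalizing k with
  | nil => rfl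
  | cons a w ih =>
    cases a
    · rw [areaVec_cons_N]; simp [List.count_cons, ih]
    · rw [areaVec_cons_E]; simp [List.count_cons, ih k]

lemma trap_nil (n k m : ℕ) : IsTrapWord n k m [] ↔ n = 0 ∧ k = 0 := by
  constructor
  · rintro ⟨h1, h2, _⟩
    simp at h1 h2
    omega
  · rintro ⟨rfl, rfl⟩
    refine ⟨by simp, by simp, fun j => by simp⟩

lemma trap_cons_N (n k m : ℕ) : IsTrapWord (n + 1) k m (N :: w) ↔ IsTrapWord n (k + m) m w := by
  constructor
  · rintro ⟨h1, h2, h3⟩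
    simp [List.count_cons, Nat.mul_succ] at h1 h2
    refine ⟨h1, by omega, fun j => ?_⟩
    have := h3 (j + 1)
    simp [List.count_cons] at this
    push_cast at this ⊢
    linarith
  · rintro ⟨h1, h2, h3⟩
    refine ⟨by simp [List.count_cons, h1], by simp [List.count_cons, h2, Nat.mul_succ]; ring, fun j => ?_⟩
    cases j with
    | zero => simp
    | succ j =>
      have := h3 j
      simp [List.count_cons]
      push_cast at this ⊢
      linarith

lemma trap_cons_N_pos (n k m : ℕ) (h : IsTrapWord n k m (N :: w)) : 0 < n := by
  obtain ⟨h1, -, -⟩ := h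
  simp [List.count_cons] at h1
  omega

lemma trap_cons_E (n k m : ℕ) : IsTrapWord n (k + 1) m (E :: w) ↔ IsTrapWord n k m w := by
  constructor
  · rintro ⟨h1, h2, h3⟩
    simp [List.count_cons] at h1 h2
    refine ⟨h1, by omega, fun j => ?_⟩
    have := h3 (j + 1)
    simp [List.count_cons] at this
    push_cast at this ⊢
    linarith
  · rintro ⟨h1, h2, h3⟩
    refine ⟨by simp [List.count_cons, h1], by simp [List.count_cons, h2]; ring, fun j => ?_⟩
    cases j with
    | zero => simp; positivity
    | succ j =>
      have := h3 j
      simp [List.count_cons]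
      push_cast at this ⊢
      linarith

lemma trap_cons_E_pos (n k m : ℕ) (h : IsTrapWord n k m (E :: w)) : 0 < k := by
  obtain ⟨-, -, h3⟩ := h
  have := h3 1
  simp [List.count_cons] at this
  omega

lemma count_NE (w : List Letter) : w.count N + w.count E = w.length := by
  induction w with
  | nil => rfl
  | cons a t ih => cases a <;> simp [List.count_cons] <;> omega

lemma mapsTo_aux (m : ℕ) : ∀ (w : List Letter) (n k : ℕ), IsTrapWord n k m w →
    (areaVec k m w).length = n ∧ (∀ x ∈ (areaVec k m w).head?, x ≤ (k : ℤ)) ∧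
    (∀ x ∈ areaVec k m w, 0 ≤ x) ∧
    List.Chain' (fun x y => y ≤ x + (m : ℤ)) (areaVec k m w) := by
  intro w
  induction w with
  | nil =>
    intro n k h
    rw [trap_nil] at h
    simp [areaVec_nil, h.1, List.Chain', List.isChain_nil]
  | cons a t ih =>
    intro n k h
    cases a
    · -- N
      have hn := trap_cons_N_pos n k m h
      obtain ⟨n', rfl⟩ : ∃ n', n = n' + 1 := ⟨n - 1, by omega⟩
      rw [trap_cons_N] at h
      obtain ⟨hlen, hhead, hnn, hch⟩ := ih n' (k + m) h
      rw [areaVec_cons_N]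
      refine ⟨by simp [hlen], by simp, ?_, ?_⟩
      · intro x hx
        rcases List.mem_cons.mp hx with rfl | hx
        · positivity
        · exact hnn x hx
      · unfold List.Chain'; rw [List.isChain_cons]
        refine ⟨fun y hy => ?_, hch⟩
        have := hhead y hy
        push_cast at this ⊢
        linarith
    · -- E
      have hk := trap_cons_E_pos n k m h
      obtain ⟨k', rfl⟩ : ∃ k', k = k' + 1 := ⟨k - 1, by omega⟩
      rw [trap_cons_E] at h
      obtain ⟨hlen, hhead, hnn, hch⟩ := ih n k' h
      rw [areaVec_cons_E']
      refine ⟨hlen, fun x hx => ?_, hnn, hch⟩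
      have := hhead x hx
      push_cast at this ⊢
      linarith

lemma inj_aux (m : ℕ) : ∀ (w1 w2 : List Letter) (n k : ℕ), IsTrapWord n k m w1 →
    IsTrapWord n k m w2 → areaVec k m w1 = areaVec k m w2 → w1 = w2 := by
  intro w1
  induction w1 with
  | nil =>
    intro w2 n k h1 h2 _
    rw [trap_nil] at h1
    obtain ⟨rfl, rfl⟩ := h1
    obtain ⟨hN, hE, -⟩ := h2
    have := count_NE w2
    simp [hN] at hE
    have : w2.length = 0 := by rw [← count_NE, hN, hE]
    exact (List.length_eq_zero_iff.mp this).symm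
  | cons a t1 ih =>
    intro w2 n k h1 h2 heq
    cases w2 with
    | nil =>
      rw [trap_nil] at h2
      obtain ⟨rfl, rfl⟩ := h2
      exfalso
      cases a
      · exact absurd (trap_cons_N_pos 0 0 m h1) (by omega)
      · exact absurd (trap_cons_E_pos 0 0 m h1) (by omega)
    | cons b t2 =>
      -- helper facts
      cases a <;> cases b
      · -- N N
        have hn := trap_cons_N_pos n k m h1
        obtain ⟨n', rfl⟩ : ∃ n', n = n' + 1 := ⟨n - 1, by omega⟩
        rw [trap_cons_N] at h1 h2
        rw [areaVec_cons_N, areaVec_cons_N] at heq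
        have := ih t2 n' (k + m) h1 h2 (List.tail_eq_of_cons_eq heq)
        rw [this]
      · -- N E : contradiction
        exfalso
        have hk := trap_cons_E_pos n k m h2
        obtain ⟨k', rfl⟩ : ∃ k', k = k' + 1 := ⟨k - 1, by omega⟩
        rw [trap_cons_E] at h2
        rw [areaVec_cons_N, areaVec_cons_E'] at heq
        have hhead := (mapsTo_aux m t2 n k' h2).2.1
        rw [← heq] at hhead
        have := hhead (((k' + 1 : ℕ)) : ℤ) (by simp)
        push_cast at this
        omega
      · -- E N : contradiction
        exfalso
        have hk := trap_cons_E_pos n k m h1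
        obtain ⟨k', rfl⟩ : ∃ k', k = k' + 1 := ⟨k - 1, by omega⟩
        rw [trap_cons_E] at h1
        rw [areaVec_cons_N, areaVec_cons_E'] at heq
        have hhead := (mapsTo_aux m t1 n k' h1).2.1
        rw [heq] at hhead
        have := hhead (((k' + 1 : ℕ)) : ℤ) (by simp)
        push_cast at this
        omega
      · -- E E
        have hk := trap_cons_E_pos n k m h1
        obtain ⟨k', rfl⟩ : ∃ k', k = k' + 1 := ⟨k - 1, by omega⟩
        rw [trap_cons_E] at h1 h2
        rw [areaVec_cons_E', areaVec_cons_E'] at heq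
        rw [ih t2 n k' h1 h2 heq]

lemma trap_replicate (k m : ℕ) : IsTrapWord 0 k m (List.replicate k E) := by
  refine ⟨by simp [List.count_replicate], by simp [List.count_replicate], fun j => ?_⟩
  rw [List.take_replicate]
  simp [List.count_replicate]

lemma areaVec_replicate (k m j : ℕ) : areaVec k m (List.replicate j E) = [] := by
  apply List.length_eq_zero_iff.mp
  rw [areaVec_length]
  simp [List.count_replicate]

lemma surj_aux (m : ℕ) : ∀ (g : List ℤ) (k : ℕ),
    (∀ x ∈ g.head?, x ≤ (k : ℤ)) → (∀ x ∈ g, 0 ≤ x) →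
    List.Chain' (fun x y => y ≤ x + (m : ℤ)) g →
    ∃ w, IsTrapWord g.length k m w ∧ areaVec k m w = g := by
  intro g
  induction g with
  | nil =>
    intro k _ _ _
    exact ⟨List.replicate k E, trap_replicate k m, areaVec_replicate k m k⟩
  | cons x g' ih =>
    have Nbranch : ∀ k : ℕ, x = (k : ℤ) → (∀ y ∈ x :: g', 0 ≤ y) →
        List.Chain' (fun x y => y ≤ x + (m : ℤ)) (x :: g') →
        ∃ w, IsTrapWord (x :: g').length k m w ∧ areaVec k m w = x :: g' := by
      intro k hx hnn hch
      unfold List.Chain' at hch; rw [List.isChain_cons] at hch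
      obtain ⟨hh, hch'⟩ := hch
      obtain ⟨w, hw, ha⟩ := ih (k + m) (fun y hy => by
          have := hh y hy; push_cast; linarith [hx ▸ this])
        (fun y hy => hnn y (List.mem_cons_of_mem _ hy)) hch'
      refine ⟨N :: w, ?_, ?_⟩
      · simpa [List.length_cons] using (trap_cons_N g'.length k m).mpr hw
      · rw [areaVec_cons_N, ha, hx]
    intro k
    induction k with
    | zero =>
      intro hhead hnn hch
      have hx : x = 0 := le_antisymm (by simpa using hhead x rfl) (hnn x (by simp))
      exact Nbranch 0 (by simp [hx]) hnn hch
    | succ k ihk =>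
      intro hhead hnn hch
      rcases eq_or_lt_of_le (by simpa using hhead x rfl : x ≤ ((k : ℤ) + 1)) with h | h
      · exact Nbranch (k + 1) (by push_cast; linarith) hnn hch
      · obtain ⟨w, hw, ha⟩ := ihk (fun y hy => by
          simp at hy; subst hy; omega) hnn hch
        exact ⟨E :: w, (trap_cons_E _ k m).mpr hw, by rw [areaVec_cons_E']; exact ha⟩

/-- For `k ≥ 0` and `n, m > 0`, the map `P ↦ g(P)` is a bijection from `T_{n,k,m}`
    onto the set of integer vectors `(g₀, …, g_{n-1})` with `0 ≤ g₀ ≤ k`, all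
    `gᵢ ≥ 0`, and `gᵢ ≤ g_{i-1} + m` for `1 ≤ i < n`. -/
theorem areaVec_bijOn (n k m : ℕ) (hn : 0 < n) (hm : 0 < m) :
    Set.BijOn (areaVec k m)
      {w : List Letter | IsTrapWord n k m w}
      {g : List ℤ | g.length = n ∧ (∀ x ∈ g.head?, x ≤ (k : ℤ)) ∧ (∀ x ∈ g, 0 ≤ x) ∧
        List.Chain' (fun x y => y ≤ x + (m : ℤ)) g} := by
  refine ⟨fun w hw => mapsTo_aux m w n k hw, fun w1 h1 w2 h2 heq => inj_aux m w1 w2 n k h1 h2 heq,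
    fun g hg => ?_⟩
  obtain ⟨hlen, hhead, hnn, hch⟩ := hg
  obtain ⟨w, hw, ha⟩ := surj_aux m g k hhead hnn hch
  rw [hlen] at hw
  exact ⟨w, hw, ha⟩
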